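/- Assume I is a real interval centered at 0 with [−1,1] ⊆ I. A function f : Iⁿ → ℝ is a symmetric signed Choquet integral if and only if: (i) f is horizontally median-additive, and (ii) f(c·x·1_S) = c·f(x·1_S) for all c, x ∈ I such that c·x ∈ I and all S ⊆ X. -/
import Mathlib


/-- `S↑_σ(i)` (0-indexed): the set `{σ(i), σ(i+1), …, σ(n-1)}`.  For `i = n` it is empty. -/
def SUp {n : ℕ} (σ : Equiv.Perm (Fin n)) (i : ℕ) : Finset (Fin n) :=
  (Finset.univ.filter (fun j : Fin n => i ≤ (j : ℕ))).image σ

/-- `S↓_σ(i)`: the set `{σ(0), …, σ(i-1)}`.  For `i = 0` it is empty. -/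
def SDown {n : ℕ} (σ : Equiv.Perm (Fin n)) (i : ℕ) : Finset (Fin n) :=
  (Finset.univ.filter (fun j : Fin n => (j : ℕ) < i)).image σ

/-- Two tuples are comonotonic if some permutation sorts both nondecreasingly. -/
def Comonotone {n : ℕ} (x y : Fin n → ℝ) : Prop :=
  ∃ σ : Equiv.Perm (Fin n), Monotone (x ∘ σ) ∧ Monotone (y ∘ σ)

/-- The tuple `r·1_S`. -/
def indTuple {n : ℕ} (S : Finset (Fin n)) (r : ℝ) : Fin n → ℝ :=
  fun j => if j ∈ S then r else 0

/-- The signed Choquet integral of `x` w.r.t. `v`, computed via a sorting permutation. -/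
noncomputable def Cv {n : ℕ} (v : Finset (Fin n) → ℝ) (x : Fin n → ℝ) : ℝ :=
  ∑ i : Fin n,
    x (Tuple.sort x i) *
      (v (SUp (Tuple.sort x) (i : ℕ)) - v (SUp (Tuple.sort x) ((i : ℕ) + 1)))

/-- `f` is the restriction to `Iⁿ` of a signed Choquet integral. -/
def IsSignedChoquetOn {n : ℕ} (I : Set ℝ) (f : (Fin n → ℝ) → ℝ) : Prop :=
  ∃ v : Finset (Fin n) → ℝ, v ∅ = 0 ∧
    ∀ σ : Equiv.Perm (Fin n), ∀ x : Fin n → ℝ, (∀ i, x i ∈ I) → Monotone (x ∘ σ) →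
      f x = ∑ i : Fin n, x (σ i) * (v (SUp σ (i : ℕ)) - v (SUp σ ((i : ℕ) + 1)))

/-- `f` is the restriction to `Iⁿ` of a symmetric signed Choquet integral
`Č_v(x) = C_v(x⁺) - C_v(x⁻)`. -/
def IsSymSignedChoquetOn {n : ℕ} (I : Set ℝ) (f : (Fin n → ℝ) → ℝ) : Prop :=
  ∃ v : Finset (Fin n) → ℝ, v ∅ = 0 ∧
    ∀ x : Fin n → ℝ, (∀ i, x i ∈ I) →
      f x = Cv v (fun i => max (x i) 0) - Cv v (fun i => max (-x i) 0)

/-- Comonotonic modularity (on tuples with entries in `D`). -/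
def ComonModularOn {n : ℕ} (D : Set ℝ) (f : (Fin n → ℝ) → ℝ) : Prop :=
  ∀ x y : Fin n → ℝ, (∀ i, x i ∈ D) → (∀ i, y i ∈ D) → Comonotone x y →
    f x + f y = f (fun i => min (x i) (y i)) + f (fun i => max (x i) (y i))

/-- Comonotonic additivity (on tuples with entries in `D`). -/
def ComonAdditiveOn {n : ℕ} (D : Set ℝ) (f : (Fin n → ℝ) → ℝ) : Prop :=
  ∀ x y : Fin n → ℝ, (∀ i, x i ∈ D) → (∀ i, y i ∈ D) → Comonotone x y →
    (∀ i, x i + y i ∈ D) → f (fun i => x i + y i) = f x + f y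

/-- Comonotonic maxitivity. -/
def ComonMaxitiveOn {n : ℕ} (D : Set ℝ) (f : (Fin n → ℝ) → ℝ) : Prop :=
  ∀ x y : Fin n → ℝ, (∀ i, x i ∈ D) → (∀ i, y i ∈ D) → Comonotone x y →
    f (fun i => max (x i) (y i)) = max (f x) (f y)

/-- Comonotonic minitivity. -/
def ComonMinitiveOn {n : ℕ} (D : Set ℝ) (f : (Fin n → ℝ) → ℝ) : Prop :=
  ∀ x y : Fin n → ℝ, (∀ i, x i ∈ D) → (∀ i, y i ∈ D) → Comonotone x y →
    f (fun i => min (x i) (y i)) = min (f x) (f y)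

/-- Horizontal min-additivity. -/
def HorizMinAdditiveOn {n : ℕ} (D : Set ℝ) (f : (Fin n → ℝ) → ℝ) : Prop :=
  ∀ x : Fin n → ℝ, (∀ i, x i ∈ D) → ∀ c ∈ D, (∀ i, x i - min (x i) c ∈ D) →
    f x = f (fun i => min (x i) c) + f (fun i => x i - min (x i) c)

/-- Horizontal max-additivity. -/
def HorizMaxAdditiveOn {n : ℕ} (D : Set ℝ) (f : (Fin n → ℝ) → ℝ) : Prop :=
  ∀ x : Fin n → ℝ, (∀ i, x i ∈ D) → ∀ c ∈ D, (∀ i, x i - max (x i) c ∈ D) →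
    f x = f (fun i => max (x i) c) + f (fun i => x i - max (x i) c)

/-- Horizontal median-additivity (for `I` centered at `0`). -/
def HorizMedAdditiveOn {n : ℕ} (I : Set ℝ) (f : (Fin n → ℝ) → ℝ) : Prop :=
  ∀ x : Fin n → ℝ, (∀ i, x i ∈ I) → ∀ c ∈ I, 0 ≤ c →
    f x = f (fun i => max (-c) (min (x i) c)) + f (fun i => x i - min (x i) c)
        + f (fun i => x i - max (x i) (-c))

/-- Invariance under horizontal min-differences (for domains of nonnegative tuples). -/
def InvHMinDiffOn {n : ℕ} (D : Set ℝ) (f : (Fin n → ℝ) → ℝ) : Prop :=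
  ∀ x : Fin n → ℝ, (∀ i, x i ∈ D) → ∀ c ∈ D,
    f x - f (fun i => min (x i) c) =
      f (fun i => if x i ≤ c then 0 else x i) -
        f (fun i => min (if x i ≤ c then 0 else x i) c)

/-- Invariance under horizontal max-differences (for domains of nonpositive tuples). -/
def InvHMaxDiffOn {n : ℕ} (D : Set ℝ) (f : (Fin n → ℝ) → ℝ) : Prop :=
  ∀ x : Fin n → ℝ, (∀ i, x i ∈ D) → ∀ c ∈ D,
    f x - f (fun i => max (x i) c) =
      f (fun i => if c ≤ x i then 0 else x i) -
        f (fun i => max (if c ≤ x i then 0 else x i) c)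

/-- `⋀_{i ∈ S} x i`, with the convention that the empty infimum is `b`. -/
noncomputable def infWith {n : ℕ} (b : ℝ) (S : Finset (Fin n)) (x : Fin n → ℝ) : ℝ :=
  if h : S.Nonempty then S.inf' h x else b

/-- An `[a,b]`-valued capacity. -/
def IsCapacityOn {n : ℕ} (a b : ℝ) (μ : Finset (Fin n) → ℝ) : Prop :=
  μ ∅ = a ∧ μ Finset.univ = b ∧ ∀ S T : Finset (Fin n), S ⊆ T → μ S ≤ μ T

/-- `f` is nondecreasing (in each argument) on tuples with entries in `D`. -/
def NondecreasingOn {n : ℕ} (D : Set ℝ) (f : (Fin n → ℝ) → ℝ) : Prop :=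
  ∀ x y : Fin n → ℝ, (∀ i, x i ∈ D) → (∀ i, y i ∈ D) → (∀ i, x i ≤ y i) → f x ≤ f y

section Aux
open Finset
variable {n : ℕ}

noncomputable def csum (v : Finset (Fin n) → ℝ) (σ : Equiv.Perm (Fin n)) (x : Fin n → ℝ) : ℝ :=
  ∑ i : Fin n, x (σ i) * (v (SUp σ (i : ℕ)) - v (SUp σ ((i : ℕ) + 1)))

lemma Cv_eq_csum (v : Finset (Fin n) → ℝ) (x : Fin n → ℝ) :
    Cv v x = csum v (Tuple.sort x) x := rfl

lemma SUp_zero (σ : Equiv.Perm (Fin n)) : SUp σ 0 = Finset.univ := by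
  ext j
  simp only [SUp, mem_image, mem_filter, mem_univ, true_and]
  exact ⟨fun _ => trivial, fun _ => ⟨σ.symm j, Nat.zero_le _, σ.apply_symm_apply j⟩⟩

lemma SUp_of_le (σ : Equiv.Perm (Fin n)) {i : ℕ} (hi : n ≤ i) : SUp σ i = ∅ := by
  ext j
  simp only [SUp, mem_image, mem_filter, mem_univ, true_and, Finset.notMem_empty, iff_false]
  rintro ⟨k, hk, rfl⟩
  exact absurd (lt_of_lt_of_le k.isLt hi) (not_lt.mpr hk)

lemma abel_sum (m : ℕ) (hm : 0 < m) (a g : ℕ → ℝ) :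
    ∑ i ∈ Finset.range m, a i * (g i - g (i + 1)) =
      (∑ i ∈ Finset.range m, (a i - (if i = 0 then 0 else a (i - 1))) * g i) - a (m - 1) * g m := by
  induction m with
  | zero => omega
  | succ k ih =>
    rcases Nat.eq_zero_or_pos k with rfl | hk
    · simp; ring
    · rw [Finset.sum_range_succ, Finset.sum_range_succ (fun i => (a i - (if i = 0 then 0 else a (i-1))) * g i), ih hk]
      have h1 : k + 1 - 1 = k := rfl
      have h2 : ¬ (k = 0) := Nat.pos_iff_ne_zero.mp hk
      rw [h1]
      simp only [if_neg h2]
      ring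


lemma SUp_eq_filter {x : Fin n → ℝ} {σ : Equiv.Perm (Fin n)} (hσ : Monotone (x ∘ σ))
    {i : ℕ} (hi : i < n) (hi0 : 0 < i)
    (hlt : x (σ ⟨i - 1, by omega⟩) < x (σ ⟨i, hi⟩)) :
    SUp σ i = Finset.univ.filter (fun j => x (σ ⟨i, hi⟩) ≤ x j) := by
  ext j
  simp only [SUp, Finset.mem_image, Finset.mem_filter, Finset.mem_univ, true_and]
  constructor
  · rintro ⟨k, hk, rfl⟩
    exact hσ (show (⟨i, hi⟩ : Fin n) ≤ k from hk)
  · intro hj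
    refine ⟨σ.symm j, ?_, σ.apply_symm_apply j⟩
    by_contra h
    push_neg at h
    have hle : (σ.symm j) ≤ (⟨i - 1, by omega⟩ : Fin n) := by
      rw [Fin.le_def]; simpa using Nat.le_sub_one_of_lt h
    have h2 := hσ hle
    simp only [Function.comp_apply, Equiv.apply_symm_apply] at h2
    linarith

lemma csum_indep {v : Finset (Fin n) → ℝ} (hv : v ∅ = 0) {x : Fin n → ℝ}
    {σ τ : Equiv.Perm (Fin n)} (hσ : Monotone (x ∘ σ)) (hτ : Monotone (x ∘ τ)) :
    csum v σ x = csum v τ x := by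
  rcases Nat.eq_zero_or_pos n with rfl | hn
  · simp [csum]
  have hcomp : x ∘ σ = x ∘ τ := by
    rw [Tuple.comp_sort_eq_comp_iff_monotone.mpr hσ, Tuple.comp_sort_eq_comp_iff_monotone.mpr hτ]
  have key : ∀ ρ : Equiv.Perm (Fin n), Monotone (x ∘ ρ) →
      csum v ρ x = (∑ i ∈ Finset.range n,
        ((fun j : ℕ => if h : j < n then x (ρ ⟨j, h⟩) else 0) i -
          (if i = 0 then 0 else (fun j : ℕ => if h : j < n then x (ρ ⟨j, h⟩) else 0) (i - 1))) *
            (fun j : ℕ => v (SUp ρ j)) i) := by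
    intro ρ hρ
    have h1 : csum v ρ x = ∑ i ∈ Finset.range n,
        (fun j : ℕ => (if h : j < n then x (ρ ⟨j, h⟩) else 0)) i *
          ((fun j : ℕ => v (SUp ρ j)) i - (fun j : ℕ => v (SUp ρ j)) (i + 1)) := by
      rw [csum, ← Fin.sum_univ_eq_sum_range]
      apply Finset.sum_congr rfl
      intro i _
      simp [i.isLt]
    rw [h1, abel_sum n hn]
    simp only [SUp_of_le ρ (le_refl n), hv, mul_zero, sub_zero]
  rw [key σ hσ, key τ hτ]
  apply Finset.sum_congr rfl
  intro i hi
  simp only []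
  have hi' : i < n := Finset.mem_range.mp hi
  have hval : ∀ j (hj : j < n), x (σ ⟨j, hj⟩) = x (τ ⟨j, hj⟩) := by
    intro j hj; exact congrFun hcomp ⟨j, hj⟩
  rcases Nat.eq_zero_or_pos i with rfl | hi0
  · simp only [SUp_zero, if_pos rfl, dif_pos hi', hval 0 hi']
  have hi1 : i - 1 < n := by omega
  rw [dif_pos hi', dif_pos hi', if_neg (Nat.pos_iff_ne_zero.mp hi0), if_neg (Nat.pos_iff_ne_zero.mp hi0),
    dif_pos hi1, dif_pos hi1, hval i hi', hval (i-1) hi1]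
  rcases eq_or_lt_of_le (show x (τ ⟨i-1, hi1⟩) ≤ x (τ ⟨i, hi'⟩) from
      hτ (Fin.mk_le_mk.mpr (Nat.sub_le i 1))) with heq | hlt
  · rw [heq]; simp
  · have hlt' : x (σ ⟨i-1, hi1⟩) < x (σ ⟨i, hi'⟩) := by rw [hval _ hi1, hval _ hi']; exact hlt
    rw [SUp_eq_filter hσ hi' hi0 hlt', SUp_eq_filter hτ hi' hi0 hlt, hval i hi']

lemma csum_eq_Cv {v : Finset (Fin n) → ℝ} (hv : v ∅ = 0) {x : Fin n → ℝ}
    {σ : Equiv.Perm (Fin n)} (hσ : Monotone (x ∘ σ)) : csum v σ x = Cv v x :=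
  csum_indep hv hσ (Tuple.monotone_sort x)
lemma csum_ind {v : Finset (Fin n) → ℝ} (hv : v ∅ = 0) (S : Finset (Fin n)) {r : ℝ} (hr : 0 ≤ r)
    {σ : Equiv.Perm (Fin n)} (hσ : Monotone (indTuple S r ∘ σ)) :
    csum v σ (indTuple S r) = r * v S := by
  rcases eq_or_lt_of_le hr with rfl | hr
  · simp [csum, indTuple]
  set m := S.card with hm
  have hmn : m ≤ n := by
    simpa using Finset.card_le_card (Finset.subset_univ S)
  set T := Finset.univ.filter (fun i : Fin n => σ i ∈ S) with hTdef
  have hTcard : T.card = m := by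
    have : T = S.map σ.symm.toEmbedding := by
      ext i
      simp only [hTdef, Finset.mem_filter, Finset.mem_univ, true_and, Finset.mem_map,
        Equiv.coe_toEmbedding]
      constructor
      · intro h; exact ⟨σ i, h, σ.symm_apply_apply i⟩
      · rintro ⟨a, ha, rfl⟩; simpa using ha
    rw [this, Finset.card_map]
  have hupper : ∀ i ∈ T, ∀ j : Fin n, i ≤ j → j ∈ T := by
    intro i hi j hij
    simp only [hTdef, Finset.mem_filter, Finset.mem_univ, true_and] at hi ⊢
    have h2 := hσ hij
    simp only [Function.comp_apply, indTuple, if_pos hi] at h2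
    by_contra hc
    rw [if_neg hc] at h2
    linarith
  have hT : ∀ i : Fin n, i ∈ T ↔ n - m ≤ (i : ℕ) := by
    intro i
    constructor
    · intro hi
      have hsub : Finset.Ici i ⊆ T := by
        intro j hj; exact hupper i hi j (Finset.mem_Ici.mp hj)
      have := Finset.card_le_card hsub
      rw [Fin.card_Ici, hTcard] at this
      omega
    · intro hi
      by_contra hc
      have hsub : T ⊆ Finset.Ioi i := by
        intro j hj
        rw [Finset.mem_Ioi]
        by_contra hj2
        exact hc (hupper j hj i (le_of_not_gt hj2))
      have := Finset.card_le_card hsub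
      rw [Fin.card_Ioi, hTcard] at this
      have := i.isLt
      omega
  have hSUp : SUp σ (n - m) = S := by
    ext j
    simp only [SUp, Finset.mem_image, Finset.mem_filter, Finset.mem_univ, true_and]
    constructor
    · rintro ⟨k, hk, rfl⟩
      have : k ∈ T := (hT k).mpr hk
      simpa [hTdef] using this
    · intro hj
      refine ⟨σ.symm j, ?_, σ.apply_symm_apply j⟩
      apply (hT (σ.symm j)).mp
      simp [hTdef, hj]
  have hterm : ∀ i : Fin n, indTuple S r (σ i) = if n - m ≤ (i : ℕ) then r else 0 := by
    intro i
    have : σ i ∈ S ↔ n - m ≤ (i : ℕ) := by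
      rw [← hT i]; simp [hTdef]
    simp only [indTuple]
    by_cases h : n - m ≤ (i : ℕ)
    · rw [if_pos (this.mpr h), if_pos h]
    · rw [if_neg (fun hc => h (this.mp hc)), if_neg h]
  have hstep : csum v σ (indTuple S r) = ∑ i ∈ Finset.range n,
      (if n - m ≤ i then r else 0) * ((fun j => v (SUp σ j)) i - (fun j => v (SUp σ j)) (i + 1)) := by
    rw [csum, ← Fin.sum_univ_eq_sum_range]
    exact Finset.sum_congr rfl fun i _ => by rw [hterm i]
  rw [hstep]
  rw [Finset.range_eq_Ico, ← Finset.sum_Ico_consecutive _ (Nat.zero_le (n - m)) (Nat.sub_le n m)]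
  have hzero : ∑ i ∈ Finset.Ico 0 (n - m),
      (if n - m ≤ i then r else 0) * ((fun j => v (SUp σ j)) i - (fun j => v (SUp σ j)) (i + 1)) = 0 :=
    Finset.sum_eq_zero fun i hi => by
      rw [if_neg (Nat.not_le.mpr (Finset.mem_Ico.mp hi).2)]; ring
  have hmain : ∑ i ∈ Finset.Ico (n - m) n,
      (if n - m ≤ i then r else 0) * ((fun j => v (SUp σ j)) i - (fun j => v (SUp σ j)) (i + 1))
      = r * v S := by
    rw [Finset.sum_congr rfl (fun i hi => by
      rw [if_pos (Finset.mem_Ico.mp hi).1] :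
      ∀ i ∈ Finset.Ico (n - m) n, _ = r * ((fun j => v (SUp σ j)) i - (fun j => v (SUp σ j)) (i + 1)))]
    rw [← Finset.mul_sum]
    congr 1
    rw [Finset.sum_Ico_eq_sub _ (Nat.sub_le n m), Finset.sum_range_sub' (fun j => v (SUp σ j)),
      Finset.sum_range_sub' (fun j => v (SUp σ j)), SUp_of_le σ (le_refl n), hv, hSUp]
    ring
  rw [hzero, hmain, zero_add]
lemma csum_split (v : Finset (Fin n) → ℝ) (σ : Equiv.Perm (Fin n)) (x y : Fin n → ℝ) :
    csum v σ (fun i => x i + y i) = csum v σ x + csum v σ y := by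
  simp only [csum, add_mul, Finset.sum_add_distrib]

lemma Cv_zero (v : Finset (Fin n) → ℝ) : Cv v (fun _ : Fin n => (0 : ℝ)) = 0 := by
  simp [Cv]

lemma Cv_ind {v : Finset (Fin n) → ℝ} (hv : v ∅ = 0) (S : Finset (Fin n)) {r : ℝ} (hr : 0 ≤ r) :
    Cv v (indTuple S r) = r * v S := by
  rw [Cv_eq_csum]
  exact csum_ind hv S hr (Tuple.monotone_sort _)

lemma Cv_minadd {v : Finset (Fin n) → ℝ} (hv : v ∅ = 0) (y : Fin n → ℝ) (c : ℝ) :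
    Cv v y = Cv v (fun i => min (y i) c) + Cv v (fun i => y i - min (y i) c) := by
  have hσ : Monotone (y ∘ Tuple.sort y) := Tuple.monotone_sort y
  set σ := Tuple.sort y with hσdef
  have h1 : Monotone ((fun i => min (y i) c) ∘ σ) := hσ.min monotone_const
  have h2 : Monotone ((fun i => y i - min (y i) c) ∘ σ) := by
    have he : ((fun i => y i - min (y i) c) ∘ σ) = fun i => max ((y ∘ σ) i - c) 0 := by
      funext i
      simp only [Function.comp_apply]
      rcases le_total (y (σ i)) c with h | h
      · rw [min_eq_left h, max_eq_right (by linarith)]; ring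
      · rw [min_eq_right h, max_eq_left (by linarith)]
    rw [he]
    have hm : Monotone fun i => (y ∘ σ) i - c := fun a b hab => by
      simpa using sub_le_sub_right (hσ hab) c
    exact hm.max monotone_const
  have hsum : csum v σ y =
      csum v σ (fun i => min (y i) c) + csum v σ (fun i => y i - min (y i) c) := by
    rw [← csum_split]
    exact congrArg (csum v σ) (funext fun i => by ring)
  rw [Cv_eq_csum, ← hσdef, hsum, csum_eq_Cv hv h1, csum_eq_Cv hv h2]

-- pointwise real identities
lemma pw1 (a c : ℝ) (hc : 0 ≤ c) : max (max (-c) (min a c)) 0 = min (max a 0) c := by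
  simp only [min_def, max_def]; split_ifs <;> linarith
lemma pw2 (a c : ℝ) (hc : 0 ≤ c) : max (-(max (-c) (min a c))) 0 = min (max (-a) 0) c := by
  simp only [min_def, max_def]; split_ifs <;> linarith
lemma pw3 (a c : ℝ) (hc : 0 ≤ c) : max (a - min a c) 0 = max a 0 - min (max a 0) c := by
  simp only [min_def, max_def]; split_ifs <;> linarith
lemma pw4 (a c : ℝ) (hc : 0 ≤ c) : max (-(a - min a c)) 0 = 0 := by
  simp only [min_def, max_def]; split_ifs <;> linarith
lemma pw5 (a c : ℝ) (hc : 0 ≤ c) : max (a - max a (-c)) 0 = 0 := by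
  simp only [min_def, max_def]; split_ifs <;> linarith
lemma pw6 (a c : ℝ) (hc : 0 ≤ c) :
    max (-(a - max a (-c))) 0 = max (-a) 0 - min (max (-a) 0) c := by
  simp only [min_def, max_def]; split_ifs <;> linarith
lemma pw7 (a : ℝ) : a - min a 0 = max a 0 := by
  simp only [min_def, max_def]; split_ifs <;> linarith
lemma pw8 (a : ℝ) : a - max a 0 = -(max (-a) 0) := by
  simp only [min_def, max_def]; split_ifs <;> linarith
lemma pw9 (a c : ℝ) (hc : 0 ≤ c) :
    min a 0 ≤ max (-c) (min a c) ∧ max (-c) (min a c) ≤ max a 0 := by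
  constructor <;> (simp only [min_def, max_def]; split_ifs <;> linarith)
lemma pw10 (a c : ℝ) (hc : 0 ≤ c) : 0 ≤ a - min a c ∧ a - min a c ≤ max a 0 := by
  constructor <;> (simp only [min_def, max_def]; split_ifs <;> linarith)
lemma pw11 (a c : ℝ) (hc : 0 ≤ c) : min a 0 ≤ a - max a (-c) ∧ a - max a (-c) ≤ 0 := by
  constructor <;> (simp only [min_def, max_def]; split_ifs <;> linarith)
lemma pw12 (a c : ℝ) (hc : 0 ≤ c) (ha : 0 ≤ a) : max (-c) (min a c) = min a c := by
  simp only [min_def, max_def]; split_ifs <;> linarith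
lemma pw13 (a c : ℝ) (hc : 0 ≤ c) (ha : 0 ≤ a) : a - max a (-c) = 0 := by
  simp only [max_def]; split_ifs <;> linarith
lemma pw14 (a c : ℝ) (hc : 0 ≤ c) (ha : a ≤ 0) : max (-c) (min a c) = max a (-c) := by
  simp only [min_def, max_def]; split_ifs <;> linarith
lemma pw15 (a c : ℝ) (hc : 0 ≤ c) (ha : a ≤ 0) : a - min a c = 0 := by
  simp only [min_def]; split_ifs <;> linarith
lemma mono_diff {x : Fin n → ℝ} {σ : Equiv.Perm (Fin n)} (hσ : Monotone (x ∘ σ)) (c : ℝ) :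
    Monotone ((fun i => x i - min (x i) c) ∘ σ) := by
  have he : ((fun i => x i - min (x i) c) ∘ σ) = fun i => max ((x ∘ σ) i - c) 0 := by
    funext i
    simp only [Function.comp_apply]
    rcases le_total (x (σ i)) c with h | h
    · rw [min_eq_left h, max_eq_right (by linarith)]; ring
    · rw [min_eq_right h, max_eq_left (by linarith)]
  rw [he]
  have hm : Monotone fun i => (x ∘ σ) i - c := fun a b hab => by
    simpa using sub_le_sub_right (hσ hab) c
  exact hm.max monotone_const

lemma rep_nonneg {I : Set ℝ} (hI : I.OrdConnected) (h0 : (0 : ℝ) ∈ I)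
    (g : (Fin n → ℝ) → ℝ) (v : Finset (Fin n) → ℝ) (hv : v ∅ = 0)
    (hom : ∀ r ∈ I, ∀ S : Finset (Fin n), g (indTuple S r) = r * v S)
    (minadd : ∀ x : Fin n → ℝ, (∀ i, x i ∈ I) → (∀ i, 0 ≤ x i) → ∀ c ∈ I, 0 ≤ c →
      g x = g (fun i => min (x i) c) + g (fun i => x i - min (x i) c)) :
    ∀ x : Fin n → ℝ, (∀ i, x i ∈ I) → (∀ i, 0 ≤ x i) → g x = Cv v x := by
  suffices h : ∀ N : ℕ, ∀ x : Fin n → ℝ, (∀ i, x i ∈ I) → (∀ i, 0 ≤ x i) →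
      ((Finset.image x Finset.univ).filter (fun t => t ≠ 0)).card ≤ N → g x = Cv v x by
    intro x hxI hx0; exact h _ x hxI hx0 le_rfl
  intro N
  induction N with
  | zero =>
    intro x hxI hx0 hcard
    have hx : ∀ i, x i = 0 := by
      intro i
      by_contra h
      have hm : x i ∈ (Finset.image x Finset.univ).filter (fun t => t ≠ 0) :=
        Finset.mem_filter.mpr ⟨Finset.mem_image.mpr ⟨i, Finset.mem_univ i, rfl⟩, h⟩
      have := Finset.card_pos.mpr ⟨_, hm⟩
      omega
    have hxeq : x = indTuple (∅ : Finset (Fin n)) 0 := funext fun i => by simp [indTuple, hx i]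
    rw [hxeq, hom 0 h0, Cv_ind hv ∅ le_rfl]
  | succ N ih =>
    intro x hxI hx0 hcard
    set V := (Finset.image x Finset.univ).filter (fun t => t ≠ 0) with hV
    by_cases hVe : V = ∅
    · exact ih x hxI hx0 (by rw [← hV, hVe]; simp)
    have hVne : V.Nonempty := Finset.nonempty_iff_ne_empty.mpr hVe
    set c := V.min' hVne with hc
    have hcV : c ∈ V := V.min'_mem hVne
    obtain ⟨hcim, hc0⟩ := Finset.mem_filter.mp hcV
    obtain ⟨j, -, hj⟩ := Finset.mem_image.mp hcim
    have hcI : c ∈ I := hj ▸ hxI j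
    have hcpos : 0 < c := lt_of_le_of_ne (hj ▸ hx0 j) (Ne.symm hc0)
    have hminle : ∀ t ∈ V, c ≤ t := fun t ht => V.min'_le t ht
    have hmemV : ∀ i, x i ≠ 0 → x i ∈ V := fun i h =>
      Finset.mem_filter.mpr ⟨Finset.mem_image.mpr ⟨i, Finset.mem_univ i, rfl⟩, h⟩
    set S := Finset.univ.filter (fun i => x i ≠ 0) with hS
    have hmin : (fun i => min (x i) c) = indTuple S c := by
      funext i
      simp only [indTuple, hS, Finset.mem_filter, Finset.mem_univ, true_and]
      by_cases h : x i = 0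
      · rw [if_neg (by simpa using h), h, min_eq_left hcpos.le]
      · rw [if_pos h, min_eq_right (hminle _ (hmemV i h))]
    set x' := fun i => x i - min (x i) c with hx'
    have hx'0 : ∀ i, 0 ≤ x' i := fun i => sub_nonneg.mpr (min_le_left _ _)
    have hx'le : ∀ i, x' i ≤ x i := fun i => sub_le_self _ (le_min (hx0 i) hcpos.le)
    have hx'I : ∀ i, x' i ∈ I := fun i => hI.out h0 (hxI i) ⟨hx'0 i, hx'le i⟩
    have hx'c : ∀ i, x i ≠ 0 → x' i = x i - c := by
      intro i h
      rw [hx']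
      simp only [min_eq_right (hminle _ (hmemV i h))]
    have hcard' : ((Finset.image x' Finset.univ).filter (fun t => t ≠ 0)).card ≤ N := by
      have hsub : (Finset.image x' Finset.univ).filter (fun t => t ≠ 0) ⊆
          (V.erase c).image (fun t => t - c) := by
        intro t ht
        obtain ⟨htim, ht0⟩ := Finset.mem_filter.mp ht
        obtain ⟨i, -, rfl⟩ := Finset.mem_image.mp htim
        have hxi : x i ≠ 0 := by
          intro h
          apply ht0
          rw [hx']
          simp only [h, min_eq_left hcpos.le, sub_zero]
        have heq : x' i = x i - c := hx'c i hxi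
        rw [heq]
        refine Finset.mem_image.mpr ⟨x i, Finset.mem_erase.mpr ⟨?_, hmemV i hxi⟩, rfl⟩
        intro hxc
        exact ht0 (by rw [heq, hxc, sub_self])
      have h1 := Finset.card_le_card hsub
      have h2 := Finset.card_image_le (s := V.erase c) (f := fun t => t - c)
      have h3 := Finset.card_erase_of_mem hcV
      have h4 := Finset.card_pos.mpr ⟨c, hcV⟩
      omega
    have hgx := minadd x hxI hx0 c hcI hcpos.le
    rw [hmin] at hgx
    rw [hgx, hom c hcI S, ← hx', ih x' hx'I hx'0 hcard']
    have hσm : Monotone (x ∘ Tuple.sort x) := Tuple.monotone_sort x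
    have h1 : Monotone (indTuple S c ∘ Tuple.sort x) := by
      rw [← hmin]; exact hσm.min monotone_const
    have h2 : Monotone (x' ∘ Tuple.sort x) := by rw [hx']; exact mono_diff hσm c
    have hfin : Cv v x = c * v S + Cv v x' := by
      rw [Cv_eq_csum]
      have hxsum : csum v (Tuple.sort x) x =
          csum v (Tuple.sort x) (indTuple S c) + csum v (Tuple.sort x) x' := by
        rw [← csum_split]
        apply congrArg
        funext i
        rw [← congrFun hmin i, hx']
        ring
      rw [hxsum, csum_ind hv S hcpos.le h1, csum_eq_Cv hv h2]
    rw [hfin]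

end Aux

theorem statement2 (n : ℕ) (hn : 0 < n) (I : Set ℝ) (hI : I.OrdConnected)
    (hsymm : ∀ x : ℝ, x ∈ I → -x ∈ I) (h11 : Set.Icc (-1 : ℝ) 1 ⊆ I)
    (f : (Fin n → ℝ) → ℝ) :
    IsSymSignedChoquetOn I f ↔
      (HorizMedAdditiveOn I f ∧
        ∀ c ∈ I, ∀ x ∈ I, c * x ∈ I → ∀ S : Finset (Fin n),
          f (indTuple S (c * x)) = c * f (indTuple S x)) := by
  have h0 : (0 : ℝ) ∈ I := h11 ⟨by norm_num, by norm_num⟩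
  have h1 : (1 : ℝ) ∈ I := h11 ⟨by norm_num, le_rfl⟩
  have hminmem : ∀ a ∈ I, min a 0 ∈ I := fun a ha => by
    rcases le_total a 0 with h | h
    · rwa [min_eq_left h]
    · rw [min_eq_right h]; exact h0
  have hmaxmem : ∀ a ∈ I, max a 0 ∈ I := fun a ha => by
    rcases le_total a 0 with h | h
    · rw [max_eq_right h]; exact h0
    · rwa [max_eq_left h]
  have hbtw : ∀ a ∈ I, ∀ t, min a 0 ≤ t → t ≤ max a 0 → t ∈ I :=
    fun a ha t u1 u2 => hI.out (hminmem a ha) (hmaxmem a ha) ⟨u1, u2⟩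
  constructor
  · rintro ⟨v, hv, hrep⟩
    have hind : ∀ r ∈ I, ∀ S : Finset (Fin n), f (indTuple S r) = r * v S := by
      intro r hr S
      have hmem : ∀ i, indTuple S r i ∈ I := fun i => by
        simp only [indTuple]; split_ifs; exacts [hr, h0]
      rw [hrep _ hmem]
      have e1 : (fun i => max (indTuple S r i) 0) = indTuple S (max r 0) := by
        funext i; simp only [indTuple]; split_ifs <;> simp
      have e2 : (fun i => max (-indTuple S r i) 0) = indTuple S (max (-r) 0) := by
        funext i; simp only [indTuple]; split_ifs <;> simp
      rw [e1, e2, Cv_ind hv S (le_max_right _ _), Cv_ind hv S (le_max_right _ _), ← sub_mul]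
      congr 1
      rcases le_total r 0 with h | h
      · rw [max_eq_right h, max_eq_left (by linarith)]; ring
      · rw [max_eq_left h, max_eq_right (by linarith)]; ring
    constructor
    · -- horizontal median-additivity
      intro x hxI c hcI hc0
      have hAI : ∀ i, max (-c) (min (x i) c) ∈ I := fun i =>
        hbtw _ (hxI i) _ (pw9 (x i) c hc0).1 (pw9 (x i) c hc0).2
      have hBI : ∀ i, x i - min (x i) c ∈ I := fun i =>
        hbtw _ (hxI i) _ (le_trans (min_le_right _ 0) (pw10 (x i) c hc0).1)
          (pw10 (x i) c hc0).2
      have hCI : ∀ i, x i - max (x i) (-c) ∈ I := fun i =>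
        hbtw _ (hxI i) _ (pw11 (x i) c hc0).1
          (le_trans (pw11 (x i) c hc0).2 (le_max_right _ 0))
      have Hx := hrep x hxI
      have HA := hrep _ hAI
      have HB := hrep _ hBI
      have HC := hrep _ hCI
      rw [show (fun i => max (max (-c) (min (x i) c)) 0) = fun i => min (max (x i) 0) c from
          funext fun i => pw1 (x i) c hc0,
        show (fun i => max (-(max (-c) (min (x i) c))) 0) = fun i => min (max (-x i) 0) c from
          funext fun i => pw2 (x i) c hc0] at HA
      rw [show (fun i => max (x i - min (x i) c) 0)
            = fun i => max (x i) 0 - min (max (x i) 0) c from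
          funext fun i => pw3 (x i) c hc0,
        show (fun i => max (-(x i - min (x i) c)) 0) = fun _ => (0:ℝ) from
          funext fun i => pw4 (x i) c hc0] at HB
      rw [show (fun i => max (x i - max (x i) (-c)) 0) = fun _ => (0:ℝ) from
          funext fun i => pw5 (x i) c hc0,
        show (fun i => max (-(x i - max (x i) (-c))) 0)
            = fun i => max (-x i) 0 - min (max (-x i) 0) c from
          funext fun i => pw6 (x i) c hc0] at HC
      have Hm1 := Cv_minadd hv (fun i => max (x i) 0) c
      have Hm2 := Cv_minadd hv (fun i => max (-x i) 0) c
      have Hz := Cv_zero v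
      rw [Hx, HA, HB, HC]
      linarith [Hm1, Hm2, Hz]
    · intro c hcI x hxI hcx S
      rw [hind (c * x) hcx S, hind x hxI S]
      ring
  · rintro ⟨hmed, hom⟩
    set v := fun S : Finset (Fin n) => f (indTuple S 1) with hvdef
    have hom' : ∀ r ∈ I, ∀ S : Finset (Fin n), f (indTuple S r) = r * v S := by
      intro r hr S
      have h := hom r hr 1 h1 (by rwa [mul_one]) S
      rwa [mul_one] at h
    have hf0 : f (fun _ => (0 : ℝ)) = 0 := by
      have h := hom' 0 h0 ∅
      have he : indTuple (∅ : Finset (Fin n)) 0 = fun _ => (0 : ℝ) :=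
        funext fun i => by simp [indTuple]
      rw [he] at h
      rw [h]; ring
    have hv0 : v ∅ = 0 := by
      have he : indTuple (∅ : Finset (Fin n)) 1 = fun _ => (0 : ℝ) :=
        funext fun i => by simp [indTuple]
      rw [hvdef]
      simp only []
      rw [he]
      exact hf0
    refine ⟨v, hv0, ?_⟩
    intro x hxI
    have hxpI : ∀ i, max (x i) 0 ∈ I := fun i => hmaxmem _ (hxI i)
    have hxmI : ∀ i, max (-x i) 0 ∈ I := fun i => hmaxmem _ (hsymm _ (hxI i))
    -- decomposition via med-additivity with c = 0
    have hdec := hmed x hxI 0 h0 le_rfl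
    rw [show (fun i => max (-(0:ℝ)) (min (x i) 0)) = fun _ => (0:ℝ) from
        funext fun i => by rw [neg_zero]; exact max_eq_left (min_le_right (x i) 0),
      show (fun i => x i - min (x i) 0) = fun i => max (x i) 0 from funext fun i => pw7 (x i),
      show (fun i => x i - max (x i) (-(0:ℝ))) = fun i => -(max (-x i) 0) from
        funext fun i => by rw [neg_zero]; exact pw8 (x i),
      hf0, zero_add] at hdec
    -- f equals Cv on nonnegative tuples
    have hminadd_f : ∀ y : Fin n → ℝ, (∀ i, y i ∈ I) → (∀ i, 0 ≤ y i) → ∀ c ∈ I, 0 ≤ c →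
        f y = f (fun i => min (y i) c) + f (fun i => y i - min (y i) c) := by
      intro y hyI hy0 c hcI hc0
      have h := hmed y hyI c hcI hc0
      rw [show (fun i => max (-c) (min (y i) c)) = fun i => min (y i) c from
          funext fun i => pw12 (y i) c hc0 (hy0 i),
        show (fun i => y i - max (y i) (-c)) = fun _ => (0:ℝ) from
          funext fun i => pw13 (y i) c hc0 (hy0 i),
        hf0, add_zero] at h
      exact h
    have hfp := rep_nonneg hI h0 f v hv0 hom' hminadd_f (fun i => max (x i) 0) hxpI
      (fun i => le_max_right _ _)
    -- the negative part via g y = -f (-y)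
    set g := fun y : Fin n → ℝ => -f (fun i => -(y i)) with hg
    have homg : ∀ r ∈ I, ∀ S : Finset (Fin n), g (indTuple S r) = r * v S := by
      intro r hr S
      have he : (fun i => -(indTuple S r i)) = indTuple S (-r) :=
        funext fun i => by simp only [indTuple]; split_ifs <;> simp
      rw [hg]
      simp only []
      rw [he, hom' (-r) (hsymm r hr) S]
      ring
    have hminadd_g : ∀ y : Fin n → ℝ, (∀ i, y i ∈ I) → (∀ i, 0 ≤ y i) → ∀ c ∈ I, 0 ≤ c →
        g y = g (fun i => min (y i) c) + g (fun i => y i - min (y i) c) := by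
      intro y hyI hy0 c hcI hc0
      have hyI' : ∀ i, -(y i) ∈ I := fun i => hsymm _ (hyI i)
      have h := hmed (fun i => -(y i)) hyI' c hcI hc0
      rw [show (fun i => max (-c) (min (-(y i)) c)) = fun i => -(min (y i) c) from
          funext fun i => by
            rw [pw14 (-(y i)) c hc0 (neg_nonpos.mpr (hy0 i)), max_neg_neg],
        show (fun i => -(y i) - min (-(y i)) c) = fun _ => (0:ℝ) from
          funext fun i => pw15 (-(y i)) c hc0 (neg_nonpos.mpr (hy0 i)),
        show (fun i => -(y i) - max (-(y i)) (-c)) = fun i => -(y i - min (y i) c) from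
          funext fun i => by rw [max_neg_neg]; ring,
        hf0] at h
      rw [hg]
      simp only [neg_neg]
      linarith [h]
    have hgm := rep_nonneg hI h0 g v hv0 homg hminadd_g (fun i => max (-x i) 0) hxmI
      (fun i => le_max_right _ _)
    rw [hg] at hgm
    simp only [] at hgm
    rw [hdec, hfp]
    linarith [hgm]
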